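/- Let A be a real m × n matrix, b ∈ ℝᵐ, λ > 0, a > 0, and 0 < μ < 1/‖A‖₂². Define C₁(x) = ‖Ax − b‖₂² + λ P_a(x), C₂(x, z) = μ(C₁(x) − ‖Ax − Az‖₂²) + ‖x − z‖₂², and let (x^k) be a sequence of nonnegative vectors such that for each k, x^{k+1} is a global minimizer of C₂(·, x^k) over {x ∈ ℝⁿ : x ≥ 0}. Then for every k, C₁(x^{k+1}) ≤ C₁(x^k) − (1/μ)‖x^{k+1} − x^k‖₂² + ‖A(x^{k+1} − x^k)‖₂² ≤ C₁(x^k); in particular, the sequence (C₁(x^k)) is nonincreasing. -/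

import Mathlib

open Matrix Filter Topology

noncomputable def rho (a t : ℝ) : ℝ := a * |t| / (a * |t| + 1)

noncomputable def Pa {n : ℕ} (a : ℝ) (x : Fin n → ℝ) : ℝ := ∑ i, rho a (x i)

open scoped Classical in
noncomputable def l0 {n : ℕ} (x : Fin n → ℝ) : ℕ :=
  (Finset.univ.filter fun i => x i ≠ 0).card

def SOL {m n : ℕ} (A : Matrix (Fin m) (Fin n) ℝ) (b : Fin m → ℝ) : Set (Fin n → ℝ) :=
  {x | A.mulVec x = b ∧ 0 ≤ x}

noncomputable def sqN {n : ℕ} (v : Fin n → ℝ) : ℝ := ∑ i, (v i) ^ 2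

def projPos {n : ℕ} (v : Fin n → ℝ) : Fin n → ℝ := fun i => max 0 (v i)

noncomputable def C1 {m n : ℕ} (A : Matrix (Fin m) (Fin n) ℝ) (b : Fin m → ℝ)
    (lam a : ℝ) (x : Fin n → ℝ) : ℝ :=
  sqN (A.mulVec x - b) + lam * Pa a x

noncomputable def C2 {m n : ℕ} (A : Matrix (Fin m) (Fin n) ℝ) (b : Fin m → ℝ)
    (lam a mu : ℝ) (x z : Fin n → ℝ) : ℝ :=
  mu * (C1 A b lam a x - sqN (A.mulVec x - A.mulVec z)) + sqN (x - z)

noncomputable def Bmu {m n : ℕ} (A : Matrix (Fin m) (Fin n) ℝ) (b : Fin m → ℝ)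
    (mu : ℝ) (z : Fin n → ℝ) : Fin n → ℝ :=
  z + mu • (Aᵀ.mulVec (b - A.mulVec z))

lemma sqN_eq {n : ℕ} (v : Fin n → ℝ) :
    sqN v = ‖(EuclideanSpace.equiv (Fin n) ℝ).symm v‖ ^ 2 := by
  rw [EuclideanSpace.norm_eq, Real.sq_sqrt (by positivity)]
  simp [sqN, sq_abs]

lemma sqN_nonneg' {n : ℕ} (v : Fin n → ℝ) : 0 ≤ sqN v := by
  unfold sqN; positivity

open scoped Matrix.Norms.L2Operator in
lemma sqN_mulVec_le {m n : ℕ} (A : Matrix (Fin m) (Fin n) ℝ) (v : Fin n → ℝ) :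
    sqN (A.mulVec v) ≤ ‖A‖ ^ 2 * sqN v := by
  rw [sqN_eq, sqN_eq, ← mul_pow]
  exact pow_le_pow_left₀ (norm_nonneg _)
    (A.l2_opNorm_mulVec ((EuclideanSpace.equiv (Fin n) ℝ).symm v)) 2

open scoped Matrix.Norms.L2Operator in
theorem stmt17 {m n : ℕ} (A : Matrix (Fin m) (Fin n) ℝ) (b : Fin m → ℝ)
    (lam a mu : ℝ) (hl : 0 < lam) (ha : 0 < a)
    (hmu : 0 < mu) (hmu2 : mu < 1 / ‖A‖ ^ 2)
    (xseq : ℕ → (Fin n → ℝ)) (hpos : ∀ k, 0 ≤ xseq k)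
    (hstep : ∀ k, ∀ y : Fin n → ℝ, 0 ≤ y →
      C2 A b lam a mu (xseq (k + 1)) (xseq k) ≤ C2 A b lam a mu y (xseq k)) :
    (∀ k : ℕ,
      C1 A b lam a (xseq (k + 1)) ≤
        C1 A b lam a (xseq k) - (1 / mu) * sqN (xseq (k + 1) - xseq k)
          + sqN (A.mulVec (xseq (k + 1) - xseq k)) ∧
      C1 A b lam a (xseq k) - (1 / mu) * sqN (xseq (k + 1) - xseq k)
          + sqN (A.mulVec (xseq (k + 1) - xseq k)) ≤ C1 A b lam a (xseq k)) ∧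
    Antitone (fun k => C1 A b lam a (xseq k)) := by
  have key : ∀ k : ℕ,
      C1 A b lam a (xseq (k + 1)) ≤
        C1 A b lam a (xseq k) - (1 / mu) * sqN (xseq (k + 1) - xseq k)
          + sqN (A.mulVec (xseq (k + 1) - xseq k)) ∧
      C1 A b lam a (xseq k) - (1 / mu) * sqN (xseq (k + 1) - xseq k)
          + sqN (A.mulVec (xseq (k + 1) - xseq k)) ≤ C1 A b lam a (xseq k) := by
    intro k
    have hAd : A.mulVec (xseq (k + 1) - xseq k)
        = A.mulVec (xseq (k + 1)) - A.mulVec (xseq k) := by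
      simp [Matrix.mulVec_sub]
    constructor
    · have h := hstep k (xseq k) (hpos k)
      have hC2z : C2 A b lam a mu (xseq k) (xseq k) = mu * C1 A b lam a (xseq k) := by
        simp [C2, sqN]
      rw [hC2z] at h
      unfold C2 at h
      rw [hAd]
      rw [← mul_le_mul_iff_right₀ hmu]
      have hmu' : mu * (1 / mu * sqN (xseq (k + 1) - xseq k))
          = sqN (xseq (k + 1) - xseq k) := by
        field_simp
      nlinarith [h]
    · have h1 : sqN (A.mulVec (xseq (k + 1) - xseq k))
          ≤ ‖A‖ ^ 2 * sqN (xseq (k + 1) - xseq k) := sqN_mulVec_le A _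
      have h2 : ‖A‖ ^ 2 * sqN (xseq (k + 1) - xseq k)
          ≤ (1 / mu) * sqN (xseq (k + 1) - xseq k) := by
        apply mul_le_mul_of_nonneg_right _ (sqN_nonneg' _)
        rcases eq_or_lt_of_le (sq_nonneg ‖A‖) with h | h
        · rw [← h]; positivity
        · rw [lt_div_iff₀ h] at hmu2
          rw [le_div_iff₀ hmu]
          nlinarith
      linarith
  refine ⟨key, antitone_nat_of_succ_le fun k => ?_⟩
  exact le_trans (key k).1 (key k).2
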